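/- For the symmetric simple random walk on ℤ started at 0, for b ∈ ℤ and real r with 0 < r < 1, ∑_{n=0}^∞ r^n P_0(w_n = b) = (1/√(1-r²)) · ζ(1/r)^{|b|}, where ζ(x) = x - √(x²-1). Equivalently, with r = 2ν/(2+λ) for ν ∈ (0,1] and λ > 0, the sum equals ((2+λ)/√((2+λ)² - 4ν²)) ζ((2+λ)/(2ν))^{|b|}. -/

import Mathlib

open MeasureTheory ProbabilityTheory

lemma seq_solve (z w M : ℝ) (hz0 : 0 < z) (hw : 1 < w) (hzw : z * w = 1)
    (u : ℕ → ℝ) (hrec : ∀ k, u (k+2) = (z + w) * u (k+1) - u k)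
    (hbd : ∀ k, |u k| ≤ M) : ∀ k, u k = u 0 * z ^ k := by
  have hz1 : z < 1 := by nlinarith
  have hwz : w - z ≠ 0 := by nlinarith
  set α := (w * u 0 - u 1) / (w - z) with hα
  set β := (u 1 - z * u 0) / (w - z) with hβdef
  have key : ∀ k, u k = α * z ^ k + β * w ^ k := by
    have h2 : ∀ k, u k = α * z ^ k + β * w ^ k ∧
        u (k+1) = α * z ^ (k+1) + β * w ^ (k+1) := by
      intro k
      induction k with
      | zero =>
        constructor
        · rw [hα, hβdef]; field_simp; ring
        · rw [hα, hβdef]; field_simp; ring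
      | succ n ih =>
        refine ⟨ih.2, ?_⟩
        rw [hrec n, ih.1, ih.2]
        linear_combination (α * z ^ n + β * w ^ n) * hzw
    exact fun k => (h2 k).1
  have hβ : β = 0 := by
    by_contra hβ
    obtain ⟨k, hk⟩ := pow_unbounded_of_one_lt ((M + |α|) / |β|) hw
    have hw0 : (0:ℝ) < w := by linarith
    have hbk : |β| * w ^ k ≤ M + |α| := by
      have h1 : β * w ^ k = u k - α * z ^ k := by rw [key k]; ring
      have h2 : |β * w ^ k| ≤ |u k| + |α * z ^ k| := by
        rw [h1]; exact abs_sub _ _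
      have hzk : |α * z ^ k| ≤ |α| := by
        rw [abs_mul, abs_pow, abs_of_pos hz0]
        calc |α| * z ^ k ≤ |α| * 1 := by
              gcongr
              exact pow_le_one₀ hz0.le hz1.le
          _ = |α| := mul_one _
      have := hbd k
      rw [abs_mul, abs_pow, abs_of_pos hw0] at h2
      linarith
    have hβpos : 0 < |β| := abs_pos.mpr hβ
    rw [div_lt_iff₀ hβpos] at hk
    nlinarith [pow_pos hw0 k]
  have hα0 : α = u 0 := by
    have := key 0
    simp [hβ] at this
    linarith
  intro k
  rw [key k, hβ, hα0]; ring


lemma step_rec {Ω : Type*} [MeasurableSpace Ω] (μ : Measure Ω) [IsProbabilityMeasure μ]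
    (X : ℕ → Ω → ℤ) (hmeas : ∀ i, Measurable (X i))
    (hindep : iIndepFun (m := fun _ : ℕ => (inferInstance : MeasurableSpace ℤ)) X μ)
    (hstep : ∀ i, μ {ω | X i ω = 1} = ENNReal.ofReal (1 / 2) ∧
      μ {ω | X i ω = -1} = ENNReal.ofReal (1 / 2))
    (n : ℕ) (b : ℤ) :
    μ {ω | ∑ i ∈ Finset.range (n + 1), X i ω = b}
      = μ {ω | ∑ i ∈ Finset.range n, X i ω = b - 1} * ENNReal.ofReal (1 / 2)
      + μ {ω | ∑ i ∈ Finset.range n, X i ω = b + 1} * ENNReal.ofReal (1 / 2) := by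
  set S : Ω → ℤ := fun ω => ∑ i ∈ Finset.range n, X i ω with hS
  have hSmeas : Measurable S := Finset.measurable_sum _ fun i _ => hmeas i
  have hind : IndepFun S (X n) μ := by
    have h := hindep.indepFun_finsetSum_of_notMem hmeas
      (Finset.notMem_range_self (n := n))
    have he : (∑ j ∈ Finset.range n, X j) = S := by
      ext ω; simp [hS, Finset.sum_apply]
    rwa [he] at h
  have hA : MeasurableSet {ω | X n ω = 1} := (hmeas n) (measurableSet_singleton 1)
  have hB : MeasurableSet {ω | X n ω = -1} := (hmeas n) (measurableSet_singleton (-1))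
  have hdisj : Disjoint {ω | X n ω = 1} {ω | X n ω = -1} := by
    rw [Set.disjoint_left]; intro ω h1 h2; simp only [Set.mem_setOf_eq] at h1 h2; omega
  have hunion : μ ({ω | X n ω = 1} ∪ {ω | X n ω = -1}) = 1 := by
    rw [measure_union hdisj hB, (hstep n).1, (hstep n).2,
      ← ENNReal.ofReal_add (by norm_num) (by norm_num)]
    norm_num
  have hnull : μ ({ω | X n ω = 1} ∪ {ω | X n ω = -1})ᶜ = 0 :=
    (prob_compl_eq_zero_iff (hA.union hB)).mpr hunion
  have hsplit : {ω | ∑ i ∈ Finset.range (n + 1), X i ω = b}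
      ∩ ({ω | X n ω = 1} ∪ {ω | X n ω = -1})
      = ({ω | S ω = b - 1} ∩ {ω | X n ω = 1})
        ∪ ({ω | S ω = b + 1} ∩ {ω | X n ω = -1}) := by
    ext ω
    simp only [Set.mem_inter_iff, Set.mem_union, Set.mem_setOf_eq, Finset.sum_range_succ, hS]
    constructor
    · rintro ⟨hsum, h1 | h2⟩
      · left; constructor <;> omega
      · right; constructor <;> omega
    · rintro (⟨h, h1⟩ | ⟨h, h2⟩) <;> constructor <;> omega
  have h1 : μ ({ω | S ω = b - 1} ∩ {ω | X n ω = 1})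
      = μ {ω | S ω = b - 1} * ENNReal.ofReal (1 / 2) := by
    have := hind.measure_inter_preimage_eq_mul {b - 1} {1}
      (measurableSet_singleton _) (measurableSet_singleton _)
    simpa [Set.preimage, (hstep n).1] using this
  have h2 : μ ({ω | S ω = b + 1} ∩ {ω | X n ω = -1})
      = μ {ω | S ω = b + 1} * ENNReal.ofReal (1 / 2) := by
    have := hind.measure_inter_preimage_eq_mul {b + 1} {-1}
      (measurableSet_singleton _) (measurableSet_singleton _)
    simpa [Set.preimage, (hstep n).2] using this
  calc μ {ω | ∑ i ∈ Finset.range (n + 1), X i ω = b}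
      = μ ({ω | ∑ i ∈ Finset.range (n + 1), X i ω = b}
          ∩ ({ω | X n ω = 1} ∪ {ω | X n ω = -1})) := (measure_inter_conull hnull).symm
    _ = μ (({ω | S ω = b - 1} ∩ {ω | X n ω = 1})
          ∪ ({ω | S ω = b + 1} ∩ {ω | X n ω = -1})) := by rw [hsplit]
    _ = μ ({ω | S ω = b - 1} ∩ {ω | X n ω = 1})
          + μ ({ω | S ω = b + 1} ∩ {ω | X n ω = -1}) := by
        apply measure_union
        · exact (hdisj.mono (Set.inter_subset_right) (Set.inter_subset_right))
        · exact (hSmeas (measurableSet_singleton _)).inter hB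
    _ = _ := by rw [h1, h2]

lemma part1 {Ω : Type*} [MeasurableSpace Ω] (μ : Measure Ω) [IsProbabilityMeasure μ]
    (X : ℕ → Ω → ℤ) (hmeas : ∀ i, Measurable (X i))
    (hindep : iIndepFun (m := fun _ : ℕ => (inferInstance : MeasurableSpace ℤ)) X μ)
    (hstep : ∀ i, μ {ω | X i ω = 1} = ENNReal.ofReal (1 / 2) ∧
      μ {ω | X i ω = -1} = ENNReal.ofReal (1 / 2))
    (b : ℤ) (r : ℝ) (hr0 : 0 < r) (hr1 : r < 1) :
    (∑' n : ℕ, r ^ n * (μ {ω | ∑ i ∈ Finset.range n, X i ω = b}).toReal)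
      = (1 / Real.sqrt (1 - r ^ 2)) *
          (1 / r - Real.sqrt ((1 / r) ^ 2 - 1)) ^ b.natAbs := by
  set p : ℕ → ℤ → ℝ :=
    fun n c => (μ {ω | ∑ i ∈ Finset.range n, X i ω = c}).toReal with hp
  have hp0 : ∀ c : ℤ, p 0 c = if c = 0 then 1 else 0 := by
    intro c
    by_cases hc : c = 0 <;> simp [hp, hc, eq_comm]
  have hpnn : ∀ n c, 0 ≤ p n c := fun n c => ENNReal.toReal_nonneg
  have hpbd : ∀ n c, p n c ≤ 1 := by
    intro n c
    have h := prob_le_one (μ := μ) (s := {ω | ∑ i ∈ Finset.range n, X i ω = c})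
    simpa [hp] using ENNReal.toReal_mono ENNReal.one_ne_top h
  have hprec : ∀ n c, p (n+1) c = (1/2) * p n (c-1) + (1/2) * p n (c+1) := by
    intro n c
    have h := step_rec μ X hmeas hindep hstep n c
    rw [hp]
    simp only [h]
    rw [ENNReal.toReal_add (by finiteness) (by finiteness)]
    rw [ENNReal.toReal_mul, ENNReal.toReal_mul, ENNReal.toReal_ofReal (by norm_num)]
    ring
  have hgeo : Summable (fun n : ℕ => r ^ n) :=
    summable_geometric_of_lt_one hr0.le hr1
  have hsum : ∀ c, Summable (fun n => r ^ n * p n c) := by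
    intro c
    apply Summable.of_nonneg_of_le
      (fun n => mul_nonneg (pow_nonneg hr0.le n) (hpnn n c))
      (fun n => ?_) hgeo
    exact mul_le_of_le_one_right (pow_nonneg hr0.le n) (hpbd n c)
  set q : ℤ → ℝ := fun c => ∑' n, r ^ n * p n c with hq
  have hq_nonneg : ∀ c, 0 ≤ q c := fun c =>
    tsum_nonneg fun n => mul_nonneg (pow_nonneg hr0.le n) (hpnn n c)
  have hq_bd : ∀ c, q c ≤ (1 - r)⁻¹ := by
    intro c
    have h1 : q c ≤ ∑' n : ℕ, r ^ n := by
      apply Summable.tsum_le_tsum _ (hsum c) hgeo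
      intro n
      exact mul_le_of_le_one_right (pow_nonneg hr0.le n) (hpbd n c)
    rwa [tsum_geometric_of_lt_one hr0.le hr1] at h1
  have hfeq : ∀ c : ℤ, q c = (if c = 0 then 1 else 0)
      + (r/2) * (q (c-1) + q (c+1)) := by
    intro c
    have h0 : q c = r ^ 0 * p 0 c + ∑' n, r ^ (n+1) * p (n+1) c :=
      Summable.tsum_eq_zero_add (hsum c)
    have h1 : ∀ n : ℕ, r ^ (n+1) * p (n+1) c
        = (r/2) * (r ^ n * p n (c-1)) + (r/2) * (r ^ n * p n (c+1)) := by
      intro n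
      rw [hprec n c, pow_succ]
      ring
    rw [h0, hp0 c]
    simp only [pow_zero, one_mul, h1]
    rw [Summable.tsum_add ((hsum (c-1)).mul_left _) ((hsum (c+1)).mul_left _),
      tsum_mul_left, tsum_mul_left]
    ring
  -- analysis
  set x : ℝ := 1 / r with hxdef
  have hx1 : 1 < x := (one_lt_one_div hr0 hr1)
  have hxsq : 0 < x ^ 2 - 1 := by nlinarith
  set s : ℝ := Real.sqrt (x ^ 2 - 1) with hsdef
  have hs0 : 0 < s := Real.sqrt_pos.mpr hxsq
  have hssq : s ^ 2 = x ^ 2 - 1 := Real.sq_sqrt hxsq.le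
  set z : ℝ := x - s with hzdef
  set w : ℝ := x + s with hwdef
  have hzw : z * w = 1 := by rw [hzdef, hwdef]; nlinarith
  have hw1 : 1 < w := by rw [hwdef]; linarith
  have hz0 : 0 < z := by nlinarith
  have hcoef : z + w = 2 / r := by rw [hzdef, hwdef, hxdef]; ring
  have hr0' : r ≠ 0 := hr0.ne'
  -- positive side
  have hu : ∀ k : ℕ, q (k : ℤ) = q 0 * z ^ k := by
    have := seq_solve z w (1 - r)⁻¹ hz0 hw1 hzw (fun k => q (k : ℤ))
      (fun k => ?_) (fun k => ?_)
    · simpa using this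
    · have h := hfeq ((k : ℤ) + 1)
      have hne : ((k : ℤ) + 1) ≠ 0 := by omega
      rw [if_neg hne] at h
      have e1 : ((k : ℤ) + 1 - 1) = (k : ℤ) := by ring
      have e2 : ((k : ℤ) + 1 + 1) = ((k + 2 : ℕ) : ℤ) := by push_cast; ring
      have e3 : ((k : ℤ) + 1) = ((k + 1 : ℕ) : ℤ) := by push_cast; ring
      rw [e1, e2, e3] at h
      rw [hcoef]
      field_simp at h ⊢
      linarith
    · rw [abs_of_nonneg (hq_nonneg _)]
      exact hq_bd _
  -- negative side
  have hv : ∀ k : ℕ, q (-(k : ℤ)) = q 0 * z ^ k := by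
    have := seq_solve z w (1 - r)⁻¹ hz0 hw1 hzw (fun k => q (-(k : ℤ)))
      (fun k => ?_) (fun k => ?_)
    · simpa using this
    · have h := hfeq (-((k : ℤ) + 1))
      have hne : (-((k : ℤ) + 1)) ≠ 0 := by omega
      rw [if_neg hne] at h
      have e1 : (-((k : ℤ) + 1) - 1) = -((k + 2 : ℕ) : ℤ) := by push_cast; ring
      have e2 : (-((k : ℤ) + 1) + 1) = -(k : ℤ) := by ring
      have e3 : (-((k : ℤ) + 1)) = -((k + 1 : ℕ) : ℤ) := by push_cast; ring
      rw [e1, e2, e3] at h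
      rw [hcoef]
      field_simp at h ⊢
      linarith
    · rw [abs_of_nonneg (hq_nonneg _)]
      exact hq_bd _
  -- value of q 0
  have hq1 : q 1 = q 0 * z := by simpa using hu 1
  have hqm1 : q (-1) = q 0 * z := by simpa using hv 1
  have h0 : q 0 = 1 + r * z * q 0 := by
    have h := hfeq 0
    rw [if_pos rfl] at h
    rw [show (0:ℤ) - 1 = -1 by ring, show (0:ℤ) + 1 = 1 by ring, hq1, hqm1] at h
    linear_combination h
  have hrz : 1 - r * z = r * s := by
    rw [hzdef, hxdef]
    field_simp
    ring
  have hsqrt : Real.sqrt (1 - r ^ 2) = r * s := by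
    have h1 : 1 - r ^ 2 = (r * s) ^ 2 := by
      have : s ^ 2 = x ^ 2 - 1 := hssq
      rw [hxdef] at this
      field_simp at this
      nlinarith
    rw [h1, Real.sqrt_sq (by positivity)]
  have hq0 : q 0 = 1 / Real.sqrt (1 - r ^ 2) := by
    rw [hsqrt]
    have hrs : (0:ℝ) < r * s := by positivity
    have : q 0 * (r * s) = 1 := by rw [← hrz]; linarith
    field_simp at this ⊢
    linarith
  -- conclude
  have hgoal : q b = q 0 * z ^ b.natAbs := by
    rcases le_or_gt 0 b with hb | hb
    · have h := hu b.natAbs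
      rwa [show ((b.natAbs : ℤ)) = b by omega] at h
    · have h := hv b.natAbs
      rwa [show (-(b.natAbs : ℤ)) = b by omega] at h
  calc (∑' n : ℕ, r ^ n * (μ {ω | ∑ i ∈ Finset.range n, X i ω = b}).toReal)
      = q b := rfl
    _ = q 0 * z ^ b.natAbs := hgoal
    _ = (1 / Real.sqrt (1 - r ^ 2)) * (x - Real.sqrt (x ^ 2 - 1)) ^ b.natAbs := by
        rw [hq0, hzdef, hsdef]

theorem stmt10 {Ω : Type*} [MeasurableSpace Ω] (μ : Measure Ω) [IsProbabilityMeasure μ]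
    (X : ℕ → Ω → ℤ) (hmeas : ∀ i, Measurable (X i))
    (hindep : iIndepFun (m := fun _ : ℕ => (inferInstance : MeasurableSpace ℤ)) X μ)
    (hstep : ∀ i, μ {ω | X i ω = 1} = ENNReal.ofReal (1 / 2) ∧
      μ {ω | X i ω = -1} = ENNReal.ofReal (1 / 2))
    (b : ℤ) :
    (∀ r : ℝ, 0 < r → r < 1 →
      (∑' n : ℕ, r ^ n * (μ {ω | ∑ i ∈ Finset.range n, X i ω = b}).toReal)
        = (1 / Real.sqrt (1 - r ^ 2)) *
            (1 / r - Real.sqrt ((1 / r) ^ 2 - 1)) ^ b.natAbs) ∧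
    (∀ ν lam : ℝ, 0 < ν → ν ≤ 1 → 0 < lam →
      (∑' n : ℕ, (2 * ν / (2 + lam)) ^ n *
          (μ {ω | ∑ i ∈ Finset.range n, X i ω = b}).toReal)
        = ((2 + lam) / Real.sqrt ((2 + lam) ^ 2 - 4 * ν ^ 2)) *
            ((2 + lam) / (2 * ν) - Real.sqrt (((2 + lam) / (2 * ν)) ^ 2 - 1)) ^ b.natAbs) := by
  constructor
  · intro r hr0 hr1
    exact part1 μ X hmeas hindep hstep b r hr0 hr1
  · intro ν lam hν0 hν1 hlam
    have hs : (0:ℝ) < 2 + lam := by linarith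
    set r : ℝ := 2 * ν / (2 + lam) with hrdef
    have hr0 : 0 < r := by positivity
    have hr1 : r < 1 := by rw [hrdef, div_lt_one hs]; linarith
    have h := part1 μ X hmeas hindep hstep b r hr0 hr1
    rw [h]
    have hinv : 1 / r = (2 + lam) / (2 * ν) := by rw [hrdef, one_div_div]
    rw [hinv]
    congr 1
    have hd : 1 - r ^ 2 = ((2 + lam) ^ 2 - 4 * ν ^ 2) / (2 + lam) ^ 2 := by
      rw [hrdef]; field_simp; ring
    have hnn : (0:ℝ) ≤ (2 + lam) ^ 2 - 4 * ν ^ 2 := by nlinarith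
    rw [hd, Real.sqrt_div hnn, Real.sqrt_sq hs.le, one_div_div]
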